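/- arXiv:2303.15746 — 7 statements merged into one kernel-verified Lean document; each statement's English description precedes it below -/
import Mathlib

section
/- For any real numbers s_1,...,s_q and λ > 0, the softmax-weighted average satisfies ∑_{i=1}^q [exp(s_i/λ)/∑_j exp(s_j/λ)] · s_i ≥ max_i s_i − λC, where C = W((q−1)/e) and W is the Lambert W function (the solution of W e^W = (q−1)/e). -/
open Real Finset

lemma lemA (u : ℝ) : -1 ≤ exp u * (u - 1) := by
  rcases le_or_gt 1 u with h | h
  · nlinarith [exp_pos u]
  · have h1 : (-u) + 1 ≤ exp (-u) := add_one_le_exp _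
    have h2 : exp u * (1 - u) ≤ exp u * exp (-u) :=
      mul_le_mul_of_nonneg_left (by linarith) (exp_pos u).le
    rw [← exp_add] at h2
    simp at h2
    nlinarith [exp_pos u]

lemma lemB (C t : ℝ) : -(exp (-(C+1))) ≤ exp t * (t + C) := by
  have h := lemA (t + C + 1)
  have key : exp (-(C+1)) * exp (t + C + 1) = exp t := by
    rw [← exp_add]; ring_nf
  have h2 := mul_le_mul_of_nonneg_left h (exp_pos (-(C+1))).le
  calc -(exp (-(C+1))) = exp (-(C+1)) * (-1) := by ring
    _ ≤ exp (-(C+1)) * (exp (t + C + 1) * (t + C + 1 - 1)) := h2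
    _ = (exp (-(C+1)) * exp (t + C + 1)) * (t + C) := by ring
    _ = exp t * (t + C) := by rw [key]

/-- Softmax-weighted average lower bound: for any `s : Fin q → ℝ` and `λ > 0`,
`∑ i softmax_λ(s)_i s_i ≥ max_i s_i − λ C` where `C = W((q−1)/e)` is the Lambert W value,
i.e. the (unique) nonnegative real with `C * exp C = (q−1)/e`. -/
theorem stmt0 (q : ℕ) (hq : 1 ≤ q) (s : Fin q → ℝ) (lam : ℝ) (hlam : 0 < lam)
    (C : ℝ) (hC0 : 0 ≤ C) (hC : C * exp C = ((q : ℝ) - 1) / exp 1) :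
    ∑ i, (exp (s i / lam) / ∑ j, exp (s j / lam)) * s i
      ≥ (univ.sup' ⟨⟨0, hq⟩, mem_univ _⟩ s) - lam * C := by
  set M := univ.sup' ⟨⟨0, hq⟩, mem_univ _⟩ s with hMdef
  obtain ⟨i0, -, hi0⟩ := exists_mem_eq_sup' (⟨⟨0, hq⟩, mem_univ _⟩ : (univ : Finset (Fin q)).Nonempty) s
  have hS : 0 < ∑ j, exp (s j / lam) := sum_pos (fun j _ => exp_pos _) ⟨i0, mem_univ _⟩
  set K : ℝ := exp (M / lam) * lam with hKdef
  have hK : 0 < K := by positivity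
  set E : ℝ := exp (-(C+1)) with hEdef
  have hC2 : C * exp C * exp 1 = (q : ℝ) - 1 := by
    rw [eq_div_iff (exp_ne_zero 1)] at hC; exact hC
  have hmul : E * (exp C * exp 1) = 1 := by
    rw [hEdef, ← exp_add, ← exp_add, show (-(C+1)+(C+1) : ℝ) = 0 by ring, exp_zero]
  have hC' : ((q : ℝ) - 1) * E = C := by linear_combination (-E) * hC2 + C * hmul
  have hterm : ∀ i, K * (-E) ≤ exp (s i / lam) * (s i - M + lam * C) := by
    intro i
    have h := lemB C ((s i - M) / lam)
    have hx : exp (s i / lam) = exp (M / lam) * exp ((s i - M) / lam) := by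
      rw [← exp_add]; congr 1; field_simp; ring
    have heq : exp (s i / lam) * (s i - M + lam * C)
        = K * (exp ((s i - M) / lam) * ((s i - M) / lam + C)) := by
      rw [hx, hKdef]; field_simp
    rw [heq]
    have := mul_le_mul_of_nonneg_left h hK.le
    linarith
  have hmax : exp (s i0 / lam) * (s i0 - M + lam * C) = K * C := by
    rw [← hi0, hKdef]; ring
  have hcard : ((univ.erase i0).card : ℝ) = (q : ℝ) - 1 := by
    rw [card_erase_of_mem (mem_univ i0), card_univ, Fintype.card_fin]
    have : (1:ℕ) ≤ q := hq
    push_cast [Nat.cast_sub this]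
    ring
  have key : 0 ≤ ∑ i, exp (s i / lam) * (s i - M + lam * C) := by
    rw [← Finset.add_sum_erase _ _ (mem_univ i0)]
    have h1 : ∑ i ∈ univ.erase i0, (K * (-E))
        ≤ ∑ i ∈ univ.erase i0, exp (s i / lam) * (s i - M + lam * C) :=
      sum_le_sum fun i _ => hterm i
    rw [Finset.sum_const, nsmul_eq_mul] at h1
    rw [hmax]
    have h2 : ((univ.erase i0).card : ℝ) * (K * (-E)) = -(K * C) := by
      rw [hcard]; linear_combination (-K) * hC'
    linarith [h1, h2]
  rw [ge_iff_le]
  have hform : ∑ i, (exp (s i / lam) / ∑ j, exp (s j / lam)) * s i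
      = (∑ i, exp (s i / lam) * s i) / ∑ j, exp (s j / lam) := by
    rw [sum_div]
    exact sum_congr rfl fun i _ => by ring
  rw [hform, le_div_iff₀ hS]
  have expand : ∑ i, exp (s i / lam) * (s i - M + lam * C)
      = (∑ i, exp (s i / lam) * s i) - (M - lam * C) * (∑ j, exp (s j / lam)) := by
    rw [Finset.mul_sum, ← Finset.sum_sub_distrib]
    exact sum_congr rfl fun i _ => by ring
  linarith [key, expand.symm.le, expand.le]
end

section
/- For nonnegative reals t_1,...,t_{q-1}, the function η(t_1,...,t_{q-1}) = ∑_{i=1}^{q-1} t_i exp(−t_i) / (1 + ∑_{j=1}^{q-1} exp(−t_j)) is bounded above by C = W((q−1)/e), where W is the Lambert W function. -/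
open Real Finset

/-- For nonnegative `t_1,…,t_{q−1}`, the function
`η(t) = ∑ i t_i e^{−t_i} / (1 + ∑ j e^{−t_j})` is bounded above by `C = W((q−1)/e)`,
where `C` is the Lambert W value, i.e. `0 ≤ C` and `C * exp C = (q−1)/e`. -/
theorem stmt1 (q : ℕ) (hq : 2 ≤ q) (t : Fin (q - 1) → ℝ) (ht : ∀ i, 0 ≤ t i)
    (C : ℝ) (hC0 : 0 ≤ C) (hC : C * exp C = ((q : ℝ) - 1) / exp 1) :
    ∑ i, t i * exp (-t i) / (1 + ∑ j, exp (-t j)) ≤ C := by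
  have hDpos : (0:ℝ) < 1 + ∑ j, exp (-t j) := by
    have : (0:ℝ) ≤ ∑ j, exp (-t j) := Finset.sum_nonneg fun j _ => (exp_pos _).le
    linarith
  rw [← Finset.sum_div, div_le_iff₀ hDpos]
  -- key pointwise bound
  have key : ∀ i : Fin (q-1), (t i - C) * exp (-t i) ≤ exp (-(1+C)) := by
    intro i
    have h1 : t i - C ≤ exp (t i - (1 + C)) := by
      have := add_one_le_exp (t i - (1 + C))
      linarith
    calc (t i - C) * exp (-t i) ≤ exp (t i - (1 + C)) * exp (-t i) := by
          exact mul_le_mul_of_nonneg_right h1 (exp_pos _).le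
      _ = exp (-(1+C)) := by rw [← exp_add]; ring_nf
  have hcard : ((Finset.univ : Finset (Fin (q-1))).card : ℝ) = (q:ℝ) - 1 := by
    simp [Nat.cast_sub (by omega : 1 ≤ q)]
  have hsum : ∑ i, (t i - C) * exp (-t i) ≤ ((q:ℝ) - 1) * exp (-(1+C)) := by
    calc ∑ i, (t i - C) * exp (-t i) ≤ ∑ _i : Fin (q-1), exp (-(1+C)) :=
          Finset.sum_le_sum fun i _ => key i
      _ = ((q:ℝ) - 1) * exp (-(1+C)) := by
          rw [Finset.sum_const, nsmul_eq_mul, hcard]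
  have hval : ((q:ℝ) - 1) * exp (-(1+C)) = C := by
    have h1 : ((q:ℝ) - 1) = C * exp C * exp 1 := by
      field_simp at hC; linarith
    rw [h1, exp_neg, exp_add]
    field_simp
  have : ∑ i, t i * exp (-t i) - C * ∑ i, exp (-t i) ≤ C := by
    have : ∑ i, (t i - C) * exp (-t i)
        = ∑ i, t i * exp (-t i) - C * ∑ i, exp (-t i) := by
      rw [Finset.mul_sum, ← Finset.sum_sub_distrib]
      congr 1; ext i; ring
    rw [this] at hsum
    linarith [hsum, hval.symm.le]
  nlinarith [this]
end

section
/- Let f be an integrable random function on a finite set X and let q ≥ 1. For a query X = (x_1,...,x_q) and a response r ∈ {1,...,q}, suppose responses are noise-free: r(X) = argmax_i f(x_i) almost surely. Then for any query X, E[max_i f(x_i)] ≤ E[max_{x∈X} E[f(x) | r(X)]], i.e., qEUBO(X) ≤ V(X). -/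
open MeasureTheory Finset

lemma integrable_sup'_aux {Ω : Type*} [MeasurableSpace Ω] {μ : Measure Ω}
    {ι : Type*} {s : Finset ι} (hs : s.Nonempty) (g : ι → Ω → ℝ)
    (hg : ∀ i, Integrable (g i) μ) :
    Integrable (fun ω => s.sup' hs fun i => g i ω) μ := by
  induction hs using Finset.Nonempty.cons_induction with
  | singleton a => simpa using hg a
  | cons a s ha hs ih =>
      simp only [Finset.sup'_cons, hs]
      exact (hg a).sup ih

/-- With noise-free responses (`r` a.s. picks an index attaining `max_i f(x_i)`),
for any query `x = (x_1,…,x_q)`: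
`E[max_i f(x_i)] ≤ E[max_{y ∈ X} E[f(y) | r]]`, i.e. `qEUBO(x) ≤ V(x)`. -/
theorem stmt3
    {Ω : Type*} [MeasurableSpace Ω] (μ : Measure Ω) [IsProbabilityMeasure μ]
    {X : Type*} [Fintype X] [Nonempty X]
    (q : ℕ) (hq : 1 ≤ q)
    (f : X → Ω → ℝ) (hmeas : ∀ y, Measurable (f y)) (hint : ∀ y, Integrable (f y) μ)
    (x : Fin q → X) (r : Ω → Fin q) (hr : Measurable r)
    (hnoisefree : ∀ᵐ ω ∂μ, ∀ i, f (x i) ω ≤ f (x (r ω)) ω) :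
    ∫ ω, (univ.sup' ⟨⟨0, hq⟩, mem_univ _⟩ fun i => f (x i) ω) ∂μ
      ≤ ∫ ω, (univ.sup' univ_nonempty
            fun y => (μ[f y | MeasurableSpace.comap r inferInstance]) ω) ∂μ := by
  classical
  have hm : MeasurableSpace.comap r inferInstance ≤ ‹MeasurableSpace Ω› := hr.comap_le
  set G : Ω → ℝ := fun ω => univ.sup' univ_nonempty
      fun y => (μ[f y | MeasurableSpace.comap r inferInstance]) ω with hG
  have hGint : Integrable G μ :=
    integrable_sup'_aux _ _ (fun y => integrable_condExp)
  have hsetj : ∀ j : Fin q,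
      MeasurableSet[MeasurableSpace.comap r inferInstance] (r ⁻¹' {j}) :=
    fun j => ⟨{j}, measurableSet_singleton j, rfl⟩
  have h1 : ∫ ω, (univ.sup' ⟨⟨0, hq⟩, mem_univ _⟩ fun i => f (x i) ω) ∂μ
      = ∫ ω, f (x (r ω)) ω ∂μ := by
    refine integral_congr_ae ?_
    filter_upwards [hnoisefree] with ω hω
    exact le_antisymm (Finset.sup'_le _ _ fun i _ => hω i)
      (Finset.le_sup' (fun i => f (x i) ω) (mem_univ (r ω)))
  have h2 : ∫ ω, f (x (r ω)) ω ∂μ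
      = ∑ j : Fin q, ∫ ω in r ⁻¹' {j}, f (x j) ω ∂μ := by
    have hdecomp : ∀ ω, f (x (r ω)) ω
        = ∑ j : Fin q, (r ⁻¹' {j}).indicator (f (x j)) ω := by
      intro ω
      rw [Finset.sum_eq_single (r ω)]
      · simp [Set.indicator_of_mem, Set.mem_preimage]
      · intro j _ hj
        apply Set.indicator_of_notMem
        simp only [Set.mem_preimage, Set.mem_singleton_iff]
        exact fun h => hj h.symm
      · simp
    simp_rw [hdecomp]
    rw [integral_finset_sum _ (fun j _ => (hint (x j)).indicator (hm _ (hsetj j)))]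
    exact Finset.sum_congr rfl fun j _ => integral_indicator (hm _ (hsetj j))
  have h3 : ∀ j : Fin q, ∫ ω in r ⁻¹' {j}, f (x j) ω ∂μ
      = ∫ ω in r ⁻¹' {j}, (μ[f (x j) | MeasurableSpace.comap r inferInstance]) ω ∂μ :=
    fun j => (setIntegral_condExp hm (hint (x j)) (hsetj j)).symm
  have h4 : ∀ j : Fin q,
      ∫ ω in r ⁻¹' {j}, (μ[f (x j) | MeasurableSpace.comap r inferInstance]) ω ∂μ
      ≤ ∫ ω in r ⁻¹' {j}, G ω ∂μ := by
    intro j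
    refine setIntegral_mono integrable_condExp.integrableOn hGint.integrableOn ?_
    intro ω
    exact Finset.le_sup' (fun y => (μ[f y | MeasurableSpace.comap r inferInstance]) ω)
      (mem_univ (x j))
  have hGdecomp : ∀ ω, G ω = ∑ j : Fin q, (r ⁻¹' {j}).indicator G ω := by
    intro ω
    rw [Finset.sum_eq_single (r ω)]
    · simp [Set.indicator_of_mem, Set.mem_preimage]
    · intro j _ hj
      apply Set.indicator_of_notMem
      simp only [Set.mem_preimage, Set.mem_singleton_iff]
      exact fun h => hj h.symm
    · simp
  have h5 : ∑ j : Fin q, ∫ ω in r ⁻¹' {j}, G ω ∂μ = ∫ ω, G ω ∂μ := by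
    calc ∑ j : Fin q, ∫ ω in r ⁻¹' {j}, G ω ∂μ
        = ∑ j : Fin q, ∫ ω, (r ⁻¹' {j}).indicator G ω ∂μ :=
          Finset.sum_congr rfl fun j _ => (integral_indicator (hm _ (hsetj j))).symm
      _ = ∫ ω, ∑ j : Fin q, (r ⁻¹' {j}).indicator G ω ∂μ :=
          (integral_finset_sum _ (fun j _ => hGint.indicator (hm _ (hsetj j)))).symm
      _ = ∫ ω, G ω ∂μ := integral_congr_ae
          (Filter.Eventually.of_forall fun ω => (hGdecomp ω).symm)
  calc ∫ ω, (univ.sup' ⟨⟨0, hq⟩, mem_univ _⟩ fun i => f (x i) ω) ∂μ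
      = ∑ j : Fin q, ∫ ω in r ⁻¹' {j}, f (x j) ω ∂μ := h1.trans h2
    _ ≤ ∑ j : Fin q, ∫ ω in r ⁻¹' {j}, G ω ∂μ :=
        Finset.sum_le_sum fun j _ => (h3 j) ▸ h4 j
    _ = ∫ ω, G ω ∂μ := h5
end

section
/- Under noise-free responses, every maximizer of qEUBO over queries X ∈ X^q is also a maximizer of the one-step value V(X) = E[max_{x∈X} E[f(x) | r(X)]]. -/
open MeasureTheory Finset

section Aux

variable {Ω : Type*} [MeasurableSpace Ω] {μ : Measure Ω}

lemma aux_integrable_sup' {ι : Type*} {s : Finset ι} (hs : s.Nonempty)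
    (g : ι → Ω → ℝ) (hg : ∀ i, Integrable (g i) μ) :
    Integrable (fun ω => s.sup' hs fun i => g i ω) μ := by
  induction hs using Finset.Nonempty.cons_induction with
  | singleton a => exact hg a
  | cons a s h hs ih =>
      have heq : (fun ω => (Finset.cons a s h).sup' (Finset.cons_nonempty h) fun i => g i ω)
           = (fun ω => g a ω) ⊔ (fun ω => s.sup' hs fun i => g i ω) := by
        funext ω
        rw [Pi.sup_apply, Finset.sup'_cons hs]
      show Integrable
        (fun ω => (Finset.cons a s h).sup' (Finset.cons_nonempty h) fun i => g i ω) μ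
      rw [heq]
      exact (hg a).sup ih

lemma aux_const_on_fiber {α : Type*} [MeasurableSpace α] (p : Ω → α)
    (g : Ω → ℝ) (hg : Measurable[MeasurableSpace.comap p inferInstance] g)
    {ω ω' : Ω} (h : p ω = p ω') : g ω = g ω' := by
  have hset : MeasurableSet[MeasurableSpace.comap p inferInstance] (g ⁻¹' {g ω}) :=
    hg (measurableSet_singleton _)
  obtain ⟨s, -, hs⟩ := MeasurableSpace.measurableSet_comap.mp hset
  have hω : ω ∈ p ⁻¹' s := by rw [hs]; simp
  have hω' : ω' ∈ p ⁻¹' s := by simpa [Set.mem_preimage, ← h] using hω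
  rw [hs] at hω'
  exact (hω' : g ω' = g ω).symm

lemma aux_integral_partition {q : ℕ} (p : Ω → Fin q) (hp : Measurable p)
    (h : Ω → ℝ) (hint : Integrable h μ) :
    ∫ ω, h ω ∂μ = ∑ i : Fin q, ∫ ω in p ⁻¹' {i}, h ω ∂μ := by
  have key : ∀ ω, h ω = ∑ i : Fin q, (p ⁻¹' {i}).indicator h ω := by
    intro ω
    rw [Finset.sum_eq_single (p ω)]
    · simp [Set.indicator_apply]
    · intro i _ hi
      simp [Set.indicator_apply, Set.mem_preimage, Ne.symm hi]
    · simp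
  calc ∫ ω, h ω ∂μ = ∫ ω, ∑ i : Fin q, (p ⁻¹' {i}).indicator h ω ∂μ := by
        simp_rw [← key]
    _ = ∑ i : Fin q, ∫ ω, (p ⁻¹' {i}).indicator h ω ∂μ :=
        integral_finset_sum _ (fun i _ => hint.indicator (hp (measurableSet_singleton i)))
    _ = ∑ i : Fin q, ∫ ω in p ⁻¹' {i}, h ω ∂μ :=
        Finset.sum_congr rfl fun i _ => integral_indicator (hp (measurableSet_singleton i))

end Aux

/-- Under noise-free responses, every maximizer of `qEUBO` over queries `Q ∈ X^q`
is also a maximizer of the one-step value `V(Q) = E[max_{y ∈ X} E[f(y) | r(Q)]]`,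
where `qEUBO(Q) = E[max_i f(Q_i)]`. -/
theorem stmt4
    {Ω : Type*} [MeasurableSpace Ω] (μ : Measure Ω) [IsProbabilityMeasure μ]
    {X : Type*} [Fintype X] [Nonempty X]
    (q : ℕ) (hq : 1 ≤ q)
    (f : X → Ω → ℝ) (hmeas : ∀ y, Measurable (f y)) (hint : ∀ y, Integrable (f y) μ)
    (r : (Fin q → X) → Ω → Fin q) (hr : ∀ Q, Measurable (r Q))
    (hnoisefree : ∀ Q : Fin q → X, ∀ᵐ ω ∂μ, ∀ i, f (Q i) ω ≤ f (Q (r Q ω)) ω)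
    (Xstar : Fin q → X)
    (hXstar : ∀ Q : Fin q → X,
      ∫ ω, (univ.sup' ⟨⟨0, hq⟩, mem_univ _⟩ fun i => f (Q i) ω) ∂μ
        ≤ ∫ ω, (univ.sup' ⟨⟨0, hq⟩, mem_univ _⟩ fun i => f (Xstar i) ω) ∂μ) :
    ∀ Q : Fin q → X,
      ∫ ω, (univ.sup' univ_nonempty
          fun y => (μ[f y | MeasurableSpace.comap (r Q) inferInstance]) ω) ∂μ
        ≤ ∫ ω, (univ.sup' univ_nonempty
            fun y => (μ[f y | MeasurableSpace.comap (r Xstar) inferInstance]) ω) ∂μ := by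
  classical
  have hne : (univ : Finset (Fin q)).Nonempty := ⟨⟨0, hq⟩, mem_univ _⟩
  -- abbreviations
  set m : (Fin q → X) → MeasurableSpace Ω :=
    fun Q => MeasurableSpace.comap (r Q) inferInstance with hm_def
  have hm : ∀ Q, m Q ≤ ‹MeasurableSpace Ω› := fun Q => (hr Q).comap_le
  set g : (Fin q → X) → X → Ω → ℝ := fun Q y => μ[f y | m Q] with hg_def
  set S : (Fin q → X) → Ω → ℝ :=
    fun Q ω => univ.sup' univ_nonempty fun y => g Q y ω with hS_def
  have hg_int : ∀ Q y, Integrable (g Q y) μ := fun Q y => integrable_condExp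
  have hS_int : ∀ Q, Integrable (S Q) μ := fun Q =>
    aux_integrable_sup' univ_nonempty (g Q) (hg_int Q)
  have hA : ∀ Q i, MeasurableSet ((r Q) ⁻¹' {i}) :=
    fun Q i => (hr Q) (measurableSet_singleton i)
  have hAm : ∀ Q i, MeasurableSet[m Q] ((r Q) ⁻¹' {i}) := fun Q i =>
    MeasurableSpace.measurableSet_comap.mpr ⟨{i}, measurableSet_singleton i, rfl⟩
  -- lower bound: qEUBO(Q) ≤ V(Q) for any Q
  have lower : ∀ Q : Fin q → X,
      ∫ ω, (univ.sup' hne fun i => f (Q i) ω) ∂μ ≤ ∫ ω, S Q ω ∂μ := by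
    intro Q
    have hae : ∀ᵐ ω ∂μ, (univ.sup' hne fun i => f (Q i) ω) = f (Q (r Q ω)) ω := by
      filter_upwards [hnoisefree Q] with ω hω
      exact le_antisymm (Finset.sup'_le _ _ fun i _ => hω i)
        (Finset.le_sup' (fun i => f (Q i) ω) (mem_univ (r Q ω)))
    have hint2 : Integrable (fun ω => f (Q (r Q ω)) ω) μ :=
      (integrable_congr hae).mp (aux_integrable_sup' hne (fun i => f (Q i)) (fun i => hint _))
    calc ∫ ω, (univ.sup' hne fun i => f (Q i) ω) ∂μ
        = ∫ ω, f (Q (r Q ω)) ω ∂μ := integral_congr_ae hae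
      _ = ∑ i : Fin q, ∫ ω in (r Q) ⁻¹' {i}, f (Q (r Q ω)) ω ∂μ :=
          aux_integral_partition (r Q) (hr Q) _ hint2
      _ = ∑ i : Fin q, ∫ ω in (r Q) ⁻¹' {i}, f (Q i) ω ∂μ :=
          Finset.sum_congr rfl fun i _ => setIntegral_congr_fun (hA Q i)
            (fun ω hω => by simp only [Set.mem_preimage, Set.mem_singleton_iff] at hω; rw [hω])
      _ = ∑ i : Fin q, ∫ ω in (r Q) ⁻¹' {i}, g Q (Q i) ω ∂μ :=
          Finset.sum_congr rfl fun i _ =>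
            (setIntegral_condExp (hm Q) (hint (Q i)) (hAm Q i)).symm
      _ ≤ ∑ i : Fin q, ∫ ω in (r Q) ⁻¹' {i}, S Q ω ∂μ := by
          refine Finset.sum_le_sum fun i _ => ?_
          refine integral_mono ((hg_int Q (Q i)).integrableOn) ((hS_int Q).integrableOn) ?_
          intro ω
          exact Finset.le_sup' (fun y => g Q y ω) (mem_univ (Q i))
      _ = ∫ ω, S Q ω ∂μ := (aux_integral_partition (r Q) (hr Q) _ (hS_int Q)).symm
  -- main part
  intro Q
  -- selection: on each fiber of r Q, S Q coincides with some single conditional expectation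
  have hsel : ∀ i : Fin q, ∃ y : X, ∀ ω ∈ (r Q) ⁻¹' {i}, S Q ω = g Q y ω := by
    intro i
    by_cases hA0 : ((r Q) ⁻¹' {i}).Nonempty
    · obtain ⟨ω₀, hω₀⟩ := hA0
      obtain ⟨y, -, hy⟩ := Finset.exists_mem_eq_sup' (univ_nonempty (α := X))
        (fun y => g Q y ω₀)
      refine ⟨y, fun ω hω => ?_⟩
      have hfib : r Q ω = r Q ω₀ := by
        simp only [Set.mem_preimage, Set.mem_singleton_iff] at hω hω₀
        rw [hω, hω₀]
      have hconst : ∀ z : X, g Q z ω = g Q z ω₀ := fun z =>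
        aux_const_on_fiber (r Q) (g Q z)
          (stronglyMeasurable_condExp (f := f z)).measurable hfib
      have : S Q ω = S Q ω₀ := by
        simp only [hS_def]
        exact Finset.sup'_congr _ rfl (fun z _ => hconst z)
      exact this.trans (hy.trans (hconst y).symm)
    · exact ⟨Classical.arbitrary X, fun ω hω => absurd ⟨ω, hω⟩ hA0⟩
  set Qp : Fin q → X := fun i => (hsel i).choose with hQp_def
  have hQp : ∀ i, ∀ ω ∈ (r Q) ⁻¹' {i}, S Q ω = g Q (Qp i) ω := fun i => (hsel i).choose_spec
  calc ∫ ω, S Q ω ∂μ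
      = ∑ i : Fin q, ∫ ω in (r Q) ⁻¹' {i}, S Q ω ∂μ :=
        aux_integral_partition (r Q) (hr Q) _ (hS_int Q)
    _ = ∑ i : Fin q, ∫ ω in (r Q) ⁻¹' {i}, g Q (Qp i) ω ∂μ :=
        Finset.sum_congr rfl fun i _ => setIntegral_congr_fun (hA Q i) (hQp i)
    _ = ∑ i : Fin q, ∫ ω in (r Q) ⁻¹' {i}, f (Qp i) ω ∂μ :=
        Finset.sum_congr rfl fun i _ => setIntegral_condExp (hm Q) (hint (Qp i)) (hAm Q i)
    _ ≤ ∑ i : Fin q, ∫ ω in (r Q) ⁻¹' {i}, (univ.sup' hne fun j => f (Qp j) ω) ∂μ := by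
        refine Finset.sum_le_sum fun i _ => ?_
        refine integral_mono ((hint (Qp i)).integrableOn)
          ((aux_integrable_sup' hne (fun j => f (Qp j)) (fun j => hint _)).integrableOn) ?_
        intro ω
        exact Finset.le_sup' (fun j => f (Qp j) ω) (mem_univ i)
    _ = ∫ ω, (univ.sup' hne fun j => f (Qp j) ω) ∂μ :=
        (aux_integral_partition (r Q) (hr Q) _
          (aux_integrable_sup' hne (fun j => f (Qp j)) (fun j => hint _))).symm
    _ ≤ ∫ ω, (univ.sup' hne fun i => f (Xstar i) ω) ∂μ := hXstar Qp
    _ ≤ ∫ ω, S Xstar ω ∂μ := lower Xstar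
end

section
/- Suppose the DM's response to query X = (x_1,...,x_q) follows the logistic likelihood P(r=i | f(X)) = exp(f(x_i)/λ)/∑_j exp(f(x_j)/λ) with λ > 0. Then U^λ(X) := E[f(x_{r(X)})] ≥ qEUBO(X) − λC where C = W((q−1)/e) and qEUBO(X) = E[max_i f(x_i)]. -/
open MeasureTheory Finset Real

private lemma term_bound (lam M a C : ℝ) (hlam : 0 < lam) :
    exp (a / lam) * (M - lam * C - a) ≤ lam * (exp (M / lam) * exp (-1 - C)) := by
  have h1 : (M - a) / lam - C ≤ exp ((M - a) / lam - 1 - C) := by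
    have := Real.add_one_le_exp ((M - a) / lam - 1 - C)
    linarith
  have h2 : exp (a / lam) * (lam * ((M - a) / lam - C))
      ≤ exp (a / lam) * (lam * exp ((M - a) / lam - 1 - C)) :=
    mul_le_mul_of_nonneg_left (mul_le_mul_of_nonneg_left h1 hlam.le) (exp_pos _).le
  have e1 : exp (a / lam) * (lam * ((M - a) / lam - C)) = exp (a / lam) * (M - lam * C - a) := by
    field_simp
    ring
  have e2 : exp (a / lam) * (lam * exp ((M - a) / lam - 1 - C))
      = lam * (exp (M / lam) * exp (-1 - C)) := by
    rw [mul_left_comm, ← exp_add, ← exp_add]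
    have harg : a / lam + ((M - a) / lam - 1 - C) = M / lam + (-1 - C) := by
      field_simp
      ring
    rw [harg]
  rw [e1, e2] at h2
  exact h2

private lemma softmax_bound (q : ℕ) (hq : 1 ≤ q) (lam : ℝ) (hlam : 0 < lam)
    (C : ℝ) (hC : C * exp C = ((q : ℝ) - 1) / exp 1) (s : Fin q → ℝ) :
    (univ.sup' ⟨⟨0, hq⟩, mem_univ _⟩ s) - lam * C
      ≤ ∑ i, s i * (exp (s i / lam) / ∑ j, exp (s j / lam)) := by
  set M := univ.sup' ⟨⟨0, hq⟩, mem_univ _⟩ s with hM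
  obtain ⟨i0, -, hi0⟩ := Finset.exists_mem_eq_sup' (⟨⟨0, hq⟩, mem_univ _⟩ :
    (univ : Finset (Fin q)).Nonempty) s
  have hD : 0 < ∑ j, exp (s j / lam) :=
    Finset.sum_pos (fun j _ => exp_pos _) ⟨i0, mem_univ _⟩
  have hcard : (((univ : Finset (Fin q)).erase i0).card : ℝ) = (q : ℝ) - 1 := by
    rw [Finset.card_erase_of_mem (mem_univ _), Finset.card_univ, Fintype.card_fin,
      Nat.cast_sub hq]
    norm_num
  have hCeq : ((q : ℝ) - 1) * exp (-1 - C) = C := by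
    have h1 : ((q : ℝ) - 1) = C * exp C * exp 1 := by
      rw [hC]; field_simp
    rw [h1, mul_assoc, mul_assoc, ← exp_add, ← exp_add]
    have : C + (1 + (-1 - C)) = 0 := by ring
    rw [this, exp_zero, mul_one]
  have key : ∑ i, exp (s i / lam) * (M - lam * C - s i) ≤ 0 := by
    rw [← Finset.add_sum_erase _ _ (mem_univ i0)]
    have h0 : exp (s i0 / lam) * (M - lam * C - s i0) = -(lam * C * exp (M / lam)) := by
      rw [← hi0]; ring
    have hrest : ∑ i ∈ univ.erase i0, exp (s i / lam) * (M - lam * C - s i)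
        ≤ ∑ _i ∈ univ.erase i0, lam * (exp (M / lam) * exp (-1 - C)) :=
      Finset.sum_le_sum fun i _ => term_bound lam M (s i) C hlam
    rw [Finset.sum_const, nsmul_eq_mul, hcard] at hrest
    have heq : ((q : ℝ) - 1) * (lam * (exp (M / lam) * exp (-1 - C)))
        = lam * C * exp (M / lam) := by
      rw [show ((q : ℝ) - 1) * (lam * (exp (M / lam) * exp (-1 - C)))
        = lam * (((q : ℝ) - 1) * exp (-1 - C)) * exp (M / lam) from by ring, hCeq]
    rw [h0]
    linarith [hrest, heq]
  have expand : (M - lam * C) * (∑ j, exp (s j / lam)) - ∑ i, s i * exp (s i / lam)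
      = ∑ i, exp (s i / lam) * (M - lam * C - s i) := by
    rw [Finset.mul_sum, ← Finset.sum_sub_distrib]
    exact Finset.sum_congr rfl fun i _ => by ring
  have hstep : ∑ i, s i * (exp (s i / lam) / ∑ j, exp (s j / lam))
      = (∑ i, s i * exp (s i / lam)) / ∑ j, exp (s j / lam) := by
    rw [Finset.sum_div]
    exact Finset.sum_congr rfl fun i _ => by rw [mul_div_assoc]
  rw [hstep, le_div_iff₀ hD]
  linarith [key, expand]

/-- If the response `r` to the query `x = (x_1,…,x_q)` follows the logistic likelihood
`P(r = i | f(X)) = exp(f(x_i)/λ) / ∑_j exp(f(x_j)/λ)` (stated as a conditional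
expectation of the indicator of `{r = i}` given the σ-algebra generated by
`(f(x_1),…,f(x_q))`), then `U^λ(X) = E[f(x_{r})] ≥ qEUBO(X) − λ C`
where `C = W((q−1)/e)` is the Lambert W value. -/
theorem stmt6
    {Ω : Type*} [MeasurableSpace Ω] (μ : Measure Ω) [IsProbabilityMeasure μ]
    {X : Type*} [Fintype X] [Nonempty X]
    (q : ℕ) (hq : 1 ≤ q)
    (f : X → Ω → ℝ) (hmeas : ∀ y, Measurable (f y)) (hint : ∀ y, Integrable (f y) μ)
    (x : Fin q → X) (r : Ω → Fin q) (hr : Measurable r)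
    (lam : ℝ) (hlam : 0 < lam)
    (C : ℝ) (hC0 : 0 ≤ C) (hC : C * exp C = ((q : ℝ) - 1) / exp 1)
    (hlik : ∀ i : Fin q,
      (μ[(fun ω => if r ω = i then (1 : ℝ) else 0) |
          MeasurableSpace.comap (fun ω (i : Fin q) => f (x i) ω) inferInstance])
        =ᵐ[μ] fun ω => exp (f (x i) ω / lam) / ∑ j, exp (f (x j) ω / lam)) :
    ∫ ω, f (x (r ω)) ω ∂μ
      ≥ (∫ ω, (univ.sup' ⟨⟨0, hq⟩, mem_univ _⟩ fun i => f (x i) ω) ∂μ) - lam * C := by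
  classical
  haveI : Nonempty (Fin q) := ⟨⟨0, hq⟩⟩
  have hg : Measurable (fun ω (i : Fin q) => f (x i) ω) :=
    measurable_pi_lambda _ fun i => hmeas (x i)
  have hm : MeasurableSpace.comap (fun ω (i : Fin q) => f (x i) ω) inferInstance
      ≤ ‹MeasurableSpace Ω› := hg.comap_le
  haveI : SigmaFinite (μ.trim hm) := inferInstance
  have hmg : Measurable[MeasurableSpace.comap (fun ω (i : Fin q) => f (x i) ω) inferInstance]
      (fun ω (i : Fin q) => f (x i) ω) := Measurable.of_comap_le le_rfl
  have hGmeas : ∀ i : Fin q,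
      StronglyMeasurable[MeasurableSpace.comap (fun ω (i : Fin q) => f (x i) ω) inferInstance]
        (f (x i)) := fun i =>
    ((measurable_pi_apply i).comp hmg).stronglyMeasurable
  have hind_meas : ∀ i : Fin q, Measurable (fun ω => if r ω = i then (1 : ℝ) else 0) := by
    intro i
    have : MeasurableSet {ω | r ω = i} := hr (measurableSet_singleton i)
    exact Measurable.ite this measurable_const measurable_const
  have hind_int : ∀ i, Integrable (fun ω => if r ω = i then (1 : ℝ) else 0) μ := by
    intro i
    refine Integrable.mono' (integrable_const 1) (hind_meas i).aestronglyMeasurable ?_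
    filter_upwards with ω
    split <;> simp
  have hprod_int : ∀ i, Integrable (fun ω => f (x i) ω * if r ω = i then (1 : ℝ) else 0) μ := by
    intro i
    refine Integrable.mono' (hint (x i)).abs
      ((hmeas (x i)).aestronglyMeasurable.mul (hind_meas i).aestronglyMeasurable) ?_
    filter_upwards with ω
    simp only [norm_mul, Real.norm_eq_abs]
    split <;> simp [abs_nonneg]
  set p : Fin q → Ω → ℝ := fun i ω => exp (f (x i) ω / lam) / ∑ j, exp (f (x j) ω / lam)
    with hp
  have hp_meas : ∀ i, Measurable (p i) := fun i =>
    (((hmeas (x i)).div_const lam).exp).div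
      (Finset.measurable_sum _ fun j _ => ((hmeas (x j)).div_const lam).exp)
  have hp_bound : ∀ i ω, 0 ≤ p i ω ∧ p i ω ≤ 1 := by
    intro i ω
    have hD : 0 < ∑ j, exp (f (x j) ω / lam) :=
      Finset.sum_pos (fun j _ => exp_pos _) univ_nonempty
    constructor
    · positivity
    · rw [hp, div_le_one hD]
      exact Finset.single_le_sum (f := fun j => exp (f (x j) ω / lam))
        (fun j _ => (exp_pos _).le) (mem_univ i)
  have hfp_int : ∀ i, Integrable (fun ω => f (x i) ω * p i ω) μ := by
    intro i
    refine Integrable.mono' (hint (x i)).abs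
      ((hmeas (x i)).aestronglyMeasurable.mul (hp_meas i).aestronglyMeasurable) ?_
    filter_upwards with ω
    rw [norm_mul, Real.norm_eq_abs (f (x i) ω)]
    have h := hp_bound i ω
    have hle : ‖p i ω‖ ≤ 1 := by rw [Real.norm_eq_abs, abs_of_nonneg h.1]; exact h.2
    calc ‖f (x i) ω‖ * ‖p i ω‖ ≤ |f (x i) ω| * 1 := by
          rw [Real.norm_eq_abs]; exact mul_le_mul_of_nonneg_left hle (abs_nonneg _)
      _ = |f (x i) ω| := mul_one _
  -- Step 1: decompose the integrand via the indicators
  have step1 : ∫ ω, f (x (r ω)) ω ∂μ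
      = ∑ i, ∫ ω, f (x i) ω * (if r ω = i then (1 : ℝ) else 0) ∂μ := by
    have hptwise : (fun ω => f (x (r ω)) ω)
        = fun ω => ∑ i, f (x i) ω * (if r ω = i then (1 : ℝ) else 0) := by
      funext ω
      rw [Finset.sum_eq_single (r ω)]
      · simp
      · intro i _ hne
        simp [Ne.symm hne]
      · intro h; exact absurd (mem_univ _) h
    calc ∫ ω, f (x (r ω)) ω ∂μ
        = ∫ ω, ∑ i, f (x i) ω * (if r ω = i then (1 : ℝ) else 0) ∂μ := by rw [hptwise]
      _ = ∑ i, ∫ ω, f (x i) ω * (if r ω = i then (1 : ℝ) else 0) ∂μ :=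
          integral_finset_sum _ (fun i _ => hprod_int i)
  -- Step 2: use the likelihood assumption via conditional expectation
  have step2 : ∀ i, ∫ ω, f (x i) ω * (if r ω = i then (1 : ℝ) else 0) ∂μ
      = ∫ ω, f (x i) ω * p i ω ∂μ := by
    intro i
    have h1 := condExp_mul_of_stronglyMeasurable_left (μ := μ) (hGmeas i) (hprod_int i) (hind_int i)
    calc ∫ ω, f (x i) ω * (if r ω = i then (1 : ℝ) else 0) ∂μ
        = ∫ ω, (μ[(f (x i) * fun ω => if r ω = i then (1 : ℝ) else 0) | MeasurableSpace.comap (fun ω (i : Fin q) => f (x i) ω) inferInstance]) ω ∂μ :=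
          (integral_condExp hm).symm
      _ = ∫ ω, f (x i) ω * (μ[(fun ω => if r ω = i then (1 : ℝ) else 0) | MeasurableSpace.comap (fun ω (i : Fin q) => f (x i) ω) inferInstance]) ω ∂μ := by
          refine integral_congr_ae ?_
          filter_upwards [h1] with ω hω
          exact hω
      _ = ∫ ω, f (x i) ω * p i ω ∂μ := by
          refine integral_congr_ae ?_
          filter_upwards [hlik i] with ω hω
          rw [hω]
  -- Step 3: exchange sum and integral
  have step3 : ∑ i, ∫ ω, f (x i) ω * p i ω ∂μ = ∫ ω, ∑ i, f (x i) ω * p i ω ∂μ :=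
    (integral_finset_sum _ fun i _ => hfp_int i).symm
  -- Integrability of the sup
  have hsup_meas : Measurable (fun ω => univ.sup' ⟨⟨0, hq⟩, mem_univ _⟩ fun i => f (x i) ω) := by
    have h := Finset.measurable_sup' (s := (univ : Finset (Fin q)))
      (⟨⟨0, hq⟩, mem_univ _⟩ : (univ : Finset (Fin q)).Nonempty)
      (f := fun i => f (x i)) (fun i _ => hmeas (x i))
    have : (univ.sup' (⟨⟨0, hq⟩, mem_univ _⟩ : (univ : Finset (Fin q)).Nonempty)
        fun i => f (x i)) = fun ω => univ.sup' ⟨⟨0, hq⟩, mem_univ _⟩ fun i => f (x i) ω := by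
      funext ω
      exact Finset.sup'_apply _ _ _
    rwa [this] at h
  have hsup_int : Integrable (fun ω => univ.sup' ⟨⟨0, hq⟩, mem_univ _⟩ fun i => f (x i) ω) μ := by
    have hsum_abs : Integrable (fun ω => ∑ i, |f (x i) ω|) μ :=
      integrable_finset_sum _ fun i _ => (hint (x i)).abs
    refine Integrable.mono' hsum_abs hsup_meas.aestronglyMeasurable ?_
    filter_upwards with ω
    rw [Real.norm_eq_abs, abs_le]
    constructor
    · have h1 : |f (x ⟨0, hq⟩) ω| ≤ ∑ i, |f (x i) ω| :=
        Finset.single_le_sum (f := fun i => |f (x i) ω|) (fun j _ => abs_nonneg _) (mem_univ _)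
      have h2 : f (x ⟨0, hq⟩) ω ≤ univ.sup' ⟨⟨0, hq⟩, mem_univ _⟩ fun i => f (x i) ω :=
        Finset.le_sup' (fun i => f (x i) ω) (mem_univ ⟨0, hq⟩)
      have h3 := neg_abs_le (f (x ⟨0, hq⟩) ω)
      linarith
    · refine Finset.sup'_le _ _ fun i _ => ?_
      exact (le_abs_self _).trans (Finset.single_le_sum (f := fun i => |f (x i) ω|)
        (fun j _ => abs_nonneg _) (mem_univ i))
  -- Step 4: pointwise softmax inequality + monotonicity
  have step4 : ∫ ω, ((univ.sup' ⟨⟨0, hq⟩, mem_univ _⟩ fun i => f (x i) ω) - lam * C) ∂μ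
      ≤ ∫ ω, ∑ i, f (x i) ω * p i ω ∂μ := by
    refine integral_mono (hsup_int.sub (integrable_const _))
      (integrable_finset_sum _ fun i _ => hfp_int i) fun ω => ?_
    exact softmax_bound q hq lam hlam C hC (fun i => f (x i) ω)
  have hconst : ∫ ω, ((univ.sup' ⟨⟨0, hq⟩, mem_univ _⟩ fun i => f (x i) ω) - lam * C) ∂μ
      = (∫ ω, (univ.sup' ⟨⟨0, hq⟩, mem_univ _⟩ fun i => f (x i) ω) ∂μ) - lam * C := by
    rw [integral_sub hsup_int (integrable_const _), integral_const]
    simp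
  rw [ge_iff_le, ← hconst]
  calc ∫ ω, ((univ.sup' ⟨⟨0, hq⟩, mem_univ _⟩ fun i => f (x i) ω) - lam * C) ∂μ
      ≤ ∫ ω, ∑ i, f (x i) ω * p i ω ∂μ := step4
    _ = ∑ i, ∫ ω, f (x i) ω * p i ω ∂μ := step3.symm
    _ = ∑ i, ∫ ω, f (x i) ω * (if r ω = i then (1 : ℝ) else 0) ∂μ := by
        exact Finset.sum_congr rfl fun i _ => (step2 i).symm
    _ = ∫ ω, f (x (r ω)) ω ∂μ := step1.symm
end

section
/- Under the logistic likelihood with noise parameter λ, if X* maximizes qEUBO(X) = E[max_i f(x_i)] over X^q, then V^λ(X*) ≥ max_X V^0(X) − λ W((q−1)/e), where V^λ is the one-step value under noise level λ and V^0 is the noise-free one-step value. -/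
open MeasureTheory Finset Real

lemma myConstFib {Ω : Type*} {q : ℕ} {r : Ω → Fin q} {g : Ω → ℝ}
    (hg : Measurable[MeasurableSpace.comap r inferInstance] g) {ω ω' : Ω}
    (h : r ω = r ω') : g ω = g ω' := by
  obtain ⟨S, -, hS⟩ := MeasurableSpace.measurableSet_comap.mp
    (hg (measurableSet_singleton (g ω)))
  have hω : ω ∈ r ⁻¹' S := by
    rw [hS]; exact Set.mem_singleton _
  have hω' : ω' ∈ r ⁻¹' S := by
    simpa [Set.mem_preimage, ← h] using hω
  rw [hS] at hω'
  exact (Set.mem_singleton_iff.mp hω').symm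

lemma myIntSup {Ω : Type*} [MeasurableSpace Ω] {μ : Measure Ω} {X : Type*} [Fintype X]
    [Nonempty X] (g : X → Ω → ℝ) (hg : ∀ y, Integrable (g y) μ) :
    Integrable (fun ω => univ.sup' univ_nonempty fun y => g y ω) μ := by
  have : (fun ω => univ.sup' univ_nonempty fun y => g y ω)
      = (univ.sup' univ_nonempty g : Ω → ℝ) := by
    ext ω; exact (Finset.sup'_apply univ_nonempty g ω).symm
  rw [this]
  exact Finset.sup'_induction (p := fun h : Ω → ℝ => Integrable h μ) _ _
    (fun a ha b hb => ha.sup hb) fun y _ => hg y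

lemma myGap {q : ℕ} (hq : 1 ≤ q) (lam C : ℝ) (hlam : 0 < lam) (hC0 : 0 ≤ C)
    (hC : C * exp C = ((q : ℝ) - 1) / exp 1) (g : Fin q → ℝ) :
    ∑ i, (univ.sup' ⟨⟨0, hq⟩, mem_univ _⟩ g - g i) * exp (g i / lam)
      ≤ lam * C * ∑ i, exp (g i / lam) := by
  set m := univ.sup' ⟨⟨0, hq⟩, mem_univ _⟩ g with hm
  obtain ⟨i0, -, hi0⟩ := Finset.exists_mem_eq_sup' (⟨⟨0, hq⟩, mem_univ _⟩ :
    (univ : Finset (Fin q)).Nonempty) g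
  have key : ∀ i : Fin q, (m - g i) * exp (g i / lam)
      ≤ lam * C * exp (g i / lam) + lam * exp (m / lam - (C + 1)) := by
    intro i
    have hx : (m - g i) / lam - C ≤ exp ((m - g i) / lam - C - 1) := by
      have := Real.add_one_le_exp ((m - g i) / lam - C - 1)
      linarith
    have hpos : (0 : ℝ) < lam * exp (g i / lam) := mul_pos hlam (exp_pos _)
    have h2 := mul_le_mul_of_nonneg_right hx hpos.le
    have hL : ((m - g i) / lam - C) * (lam * exp (g i / lam))
        = (m - g i) * exp (g i / lam) - lam * C * exp (g i / lam) := by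
      field_simp
    have hR : exp ((m - g i) / lam - C - 1) * (lam * exp (g i / lam))
        = lam * exp (m / lam - (C + 1)) := by
      have harg : (m - g i) / lam - C - 1 + g i / lam = m / lam - (C + 1) := by
        field_simp; ring
      rw [mul_comm, mul_assoc, mul_comm (exp (g i / lam)), ← Real.exp_add, harg]
    rw [hL, hR] at h2
    linarith
  have hzero : (m - g i0) * exp (g i0 / lam) = 0 := by
    rw [← hi0]; simp [hm]
  have hsum : ∑ i, (m - g i) * exp (g i / lam)
      = ∑ i ∈ univ.erase i0, (m - g i) * exp (g i / lam) :=
    (Finset.sum_erase (f := fun i => (m - g i) * exp (g i / lam)) univ hzero).symm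
  have hbound : ∑ i ∈ univ.erase i0, (m - g i) * exp (g i / lam)
      ≤ ∑ i ∈ univ.erase i0, (lam * C * exp (g i / lam) + lam * exp (m / lam - (C + 1))) :=
    Finset.sum_le_sum fun i _ => key i
  have hcard : ((univ.erase i0).card : ℝ) = (q : ℝ) - 1 := by
    rw [Finset.card_erase_of_mem (mem_univ _), Finset.card_univ, Fintype.card_fin,
      Nat.cast_sub hq, Nat.cast_one]
  have hqc : ((q : ℝ) - 1) * exp (m / lam - (C + 1)) = C * exp (m / lam) := by
    have h1 : ((q : ℝ) - 1) = C * exp C * exp 1 := by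
      rw [hC]; field_simp
    rw [h1, Real.exp_sub, Real.exp_add]
    have he1 : exp 1 ≠ 0 := (exp_pos 1).ne'
    have heC : exp C ≠ 0 := (exp_pos C).ne'
    field_simp
  have hfin : ∑ i ∈ univ.erase i0, (lam * C * exp (g i / lam) + lam * exp (m / lam - (C + 1)))
      = lam * C * ∑ i, exp (g i / lam) := by
    rw [Finset.sum_add_distrib, Finset.sum_const, nsmul_eq_mul, hcard, ← Finset.mul_sum]
    have hsplit : ∑ i, exp (g i / lam)
        = ∑ i ∈ univ.erase i0, exp (g i / lam) + exp (g i0 / lam) :=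
      (Finset.sum_erase_add univ _ (mem_univ i0)).symm
    have hmi0 : exp (m / lam) = exp (g i0 / lam) := by rw [hm, hi0]
    calc lam * C * ∑ i ∈ univ.erase i0, exp (g i / lam)
          + ((q : ℝ) - 1) * (lam * exp (m / lam - (C + 1)))
        = lam * C * ∑ i ∈ univ.erase i0, exp (g i / lam)
          + lam * (((q : ℝ) - 1) * exp (m / lam - (C + 1))) := by ring
      _ = lam * C * ∑ i ∈ univ.erase i0, exp (g i / lam) + lam * (C * exp (g i0 / lam)) := by
          rw [hqc, hmi0]
      _ = lam * C * (∑ i ∈ univ.erase i0, exp (g i / lam) + exp (g i0 / lam)) := by ring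
      _ = lam * C * ∑ i, exp (g i / lam) := by rw [← hsplit]
  calc ∑ i, (m - g i) * exp (g i / lam)
      = ∑ i ∈ univ.erase i0, (m - g i) * exp (g i / lam) := hsum
    _ ≤ _ := hbound
    _ = lam * C * ∑ i, exp (g i / lam) := hfin

lemma myIte {Ω : Type*} [MeasurableSpace Ω] (μ : Measure Ω) {q : ℕ} (r : Ω → Fin q)
    (hr : Measurable r) (h : Ω → ℝ) (hh : Integrable h μ) (i : Fin q) :
    Integrable (fun ω => if r ω = i then h ω else 0) μ ∧
    ∫ ω, (if r ω = i then h ω else 0) ∂μ = ∫ ω in r ⁻¹' {i}, h ω ∂μ := by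
  have hmeasA : MeasurableSet (r ⁻¹' {i}) := hr (measurableSet_singleton i)
  have heq : (fun ω => if r ω = i then h ω else 0) = (r ⁻¹' {i}).indicator h := by
    ext ω; by_cases h' : r ω = i <;> simp [Set.indicator_apply, h']
  refine ⟨?_, ?_⟩
  · rw [heq]; exact hh.indicator hmeasA
  · rw [heq, integral_indicator hmeasA]

lemma mySumIte {Ω : Type*} {q : ℕ} (r : Ω → Fin q) (k : Fin q → Ω → ℝ) (ω : Ω) :
    ∑ i, (if r ω = i then k i ω else 0) = k (r ω) ω := by
  rw [Finset.sum_ite_eq]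
  simp

lemma myStepB {Ω : Type*} [MeasurableSpace Ω] (μ : Measure Ω) [IsProbabilityMeasure μ]
    {X : Type*} [Fintype X] [Nonempty X] {q : ℕ} (hq : 1 ≤ q)
    (f : X → Ω → ℝ) (hint : ∀ y, Integrable (f y) μ)
    (r : Ω → Fin q) (hr : Measurable r) (Q : Fin q → X) :
    ∫ ω, (∑ i, if r ω = i then f (Q i) ω else 0) ∂μ
      ≤ ∫ ω, (univ.sup' univ_nonempty
            fun y => (μ[f y | MeasurableSpace.comap r inferInstance]) ω) ∂μ := by
  classical
  have hGle : MeasurableSpace.comap r inferInstance ≤ _ := hr.comap_le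
  set g : X → Ω → ℝ := fun y => μ[f y | MeasurableSpace.comap r inferInstance] with hg
  have hgint : ∀ y, Integrable (g y) μ := fun y => integrable_condExp
  set S : Ω → ℝ := fun ω => univ.sup' univ_nonempty fun y => g y ω with hS
  have hSint : Integrable S μ := by rw [hS]; exact myIntSup (μ := μ) g hgint
  have hBmeas : ∀ i : Fin q, MeasurableSet[MeasurableSpace.comap r inferInstance] (r ⁻¹' {i}) :=
    fun i => MeasurableSpace.measurableSet_comap.mpr ⟨{i}, measurableSet_singleton i, rfl⟩
  calc ∫ ω, (∑ i, if r ω = i then f (Q i) ω else 0) ∂μ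
      = ∑ i, ∫ ω, (if r ω = i then f (Q i) ω else 0) ∂μ :=
        integral_finset_sum _ fun i _ => (myIte μ r hr _ (hint _) i).1
    _ = ∑ i, ∫ ω, (if r ω = i then g (Q i) ω else 0) ∂μ := by
        refine Finset.sum_congr rfl fun i _ => ?_
        rw [(myIte μ r hr _ (hint _) i).2, (myIte μ r hr _ (hgint _) i).2]
        exact (setIntegral_condExp hGle (hint _) (hBmeas i)).symm
    _ ≤ ∑ i, ∫ ω, (if r ω = i then S ω else 0) ∂μ := by
        refine Finset.sum_le_sum fun i _ => ?_
        refine integral_mono (myIte μ r hr _ (hgint _) i).1 (myIte μ r hr _ hSint i).1 ?_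
        intro ω
        by_cases h : r ω = i
        · simp only [h, if_true]
          exact Finset.le_sup' (fun y => g y ω) (mem_univ (Q i))
        · simp [h]
    _ = ∫ ω, (∑ i, if r ω = i then S ω else 0) ∂μ :=
        (integral_finset_sum _ fun i _ => (myIte μ r hr _ hSint i).1).symm
    _ = ∫ ω, S ω ∂μ := by
        refine integral_congr_ae (Filter.Eventually.of_forall fun ω => ?_)
        exact mySumIte r (fun _ => S) ω

lemma myStepA {Ω : Type*} [MeasurableSpace Ω] (μ : Measure Ω) [IsProbabilityMeasure μ]
    {X : Type*} [Fintype X] [Nonempty X] {q : ℕ} (hq : 1 ≤ q)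
    (f : X → Ω → ℝ) (hint : ∀ y, Integrable (f y) μ)
    (r : Ω → Fin q) (hr : Measurable r) :
    ∃ Q' : Fin q → X,
      ∫ ω, (univ.sup' univ_nonempty
          fun y => (μ[f y | MeasurableSpace.comap r inferInstance]) ω) ∂μ
        ≤ ∫ ω, (univ.sup' ⟨⟨0, hq⟩, mem_univ _⟩ fun i => f (Q' i) ω) ∂μ := by
  classical
  haveI : Nonempty (Fin q) := ⟨⟨0, hq⟩⟩
  have hGle : MeasurableSpace.comap r inferInstance ≤ _ := hr.comap_le
  set g : X → Ω → ℝ := fun y => μ[f y | MeasurableSpace.comap r inferInstance] with hg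
  have hgint : ∀ y, Integrable (g y) μ := fun y => integrable_condExp
  have hgmeas : ∀ y, Measurable[MeasurableSpace.comap r inferInstance] (g y) :=
    fun y => stronglyMeasurable_condExp.measurable
  have hconst : ∀ (y : X) {ω ω' : Ω}, r ω = r ω' → g y ω = g y ω' :=
    fun y {ω ω'} h => myConstFib (hgmeas y) h
  have hsel : ∀ i : Fin q, ∃ y : X, ∀ ω, r ω = i →
      (univ.sup' univ_nonempty fun y' => g y' ω) = g y ω := by
    intro i
    by_cases h : ∃ ω, r ω = i
    · obtain ⟨ω0, hω0⟩ := h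
      obtain ⟨y, -, hy⟩ := Finset.exists_mem_eq_sup'
        (univ_nonempty : (univ : Finset X).Nonempty) (fun y' => g y' ω0)
      refine ⟨y, fun ω hω => ?_⟩
      have h1 : ∀ y' ∈ (univ : Finset X), g y' ω = g y' ω0 :=
        fun y' _ => hconst y' (hω.trans hω0.symm)
      calc (univ.sup' univ_nonempty fun y' => g y' ω)
          = univ.sup' univ_nonempty fun y' => g y' ω0 := Finset.sup'_congr _ rfl h1
        _ = g y ω0 := hy
        _ = g y ω := (hconst y (hω.trans hω0.symm)).symm
    · exact ⟨Classical.arbitrary X, fun ω hω => absurd ⟨ω, hω⟩ h⟩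
  choose Q' hQ' using hsel
  refine ⟨Q', ?_⟩
  have hBmeas : ∀ i : Fin q,
      MeasurableSet[MeasurableSpace.comap r inferInstance] (r ⁻¹' {i}) :=
    fun i => MeasurableSpace.measurableSet_comap.mpr ⟨{i}, measurableSet_singleton i, rfl⟩
  calc ∫ ω, (univ.sup' univ_nonempty fun y => g y ω) ∂μ
      = ∫ ω, (∑ i, if r ω = i then g (Q' i) ω else 0) ∂μ := by
        refine integral_congr_ae (Filter.Eventually.of_forall fun ω => ?_)
        show (univ.sup' univ_nonempty fun y => g y ω)
          = ∑ i, if r ω = i then g (Q' i) ω else 0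
        rw [mySumIte r (fun i => g (Q' i))]
        exact hQ' (r ω) ω rfl
    _ = ∑ i, ∫ ω, (if r ω = i then g (Q' i) ω else 0) ∂μ :=
        integral_finset_sum _ fun i _ => (myIte μ r hr _ (hgint _) i).1
    _ = ∑ i, ∫ ω, (if r ω = i then f (Q' i) ω else 0) ∂μ := by
        refine Finset.sum_congr rfl fun i _ => ?_
        rw [(myIte μ r hr _ (hgint _) i).2, (myIte μ r hr _ (hint _) i).2]
        exact setIntegral_condExp hGle (hint _) (hBmeas i)
    _ = ∫ ω, (∑ i, if r ω = i then f (Q' i) ω else 0) ∂μ :=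
        (integral_finset_sum _ fun i _ => (myIte μ r hr _ (hint _) i).1).symm
    _ ≤ ∫ ω, (univ.sup' ⟨⟨0, hq⟩, mem_univ _⟩ fun i => f (Q' i) ω) ∂μ := by
        refine integral_mono
          (integrable_finset_sum _ fun i _ => (myIte μ r hr _ (hint _) i).1)
          (myIntSup (μ := μ) (fun i ω => f (Q' i) ω) (fun i => hint _)) ?_
        intro ω
        show (∑ i, if r ω = i then f (Q' i) ω else 0)
          ≤ univ.sup' ⟨⟨0, hq⟩, mem_univ _⟩ fun i => f (Q' i) ω
        rw [mySumIte r (fun i => f (Q' i))]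
        exact Finset.le_sup' (fun i => f (Q' i) ω) (mem_univ (r ω))

lemma myStepC {Ω : Type*} [MeasurableSpace Ω] (μ : Measure Ω) [IsProbabilityMeasure μ]
    {X : Type*} [Fintype X] {q : ℕ} (hq : 1 ≤ q)
    (f : X → Ω → ℝ) (hmeas : ∀ y, Measurable (f y)) (hint : ∀ y, Integrable (f y) μ)
    (lam C : ℝ) (hlam : 0 < lam) (hC0 : 0 ≤ C)
    (hC : C * exp C = ((q : ℝ) - 1) / exp 1)
    (r : Ω → Fin q) (hr : Measurable r) (Q : Fin q → X)
    (hlik : ∀ i : Fin q,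
      (μ[(fun ω => if r ω = i then (1 : ℝ) else 0) |
          MeasurableSpace.comap (fun ω (i : Fin q) => f (Q i) ω) inferInstance])
        =ᵐ[μ] fun ω => exp (f (Q i) ω / lam) / ∑ j, exp (f (Q j) ω / lam)) :
    (∫ ω, (univ.sup' ⟨⟨0, hq⟩, mem_univ _⟩ fun i => f (Q i) ω) ∂μ) - lam * C
      ≤ ∫ ω, (∑ i, if r ω = i then f (Q i) ω else 0) ∂μ := by
  classical
  haveI : Nonempty (Fin q) := ⟨⟨0, hq⟩⟩
  have ne : (univ : Finset (Fin q)).Nonempty := ⟨⟨0, hq⟩, mem_univ _⟩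
  have hF : Measurable (fun ω (i : Fin q) => f (Q i) ω) :=
    measurable_pi_lambda _ fun i => hmeas _
  have hFle : MeasurableSpace.comap (fun ω (i : Fin q) => f (Q i) ω) inferInstance ≤ _ :=
    hF.comap_le
  set M : Ω → ℝ := fun ω => univ.sup' ⟨⟨0, hq⟩, mem_univ _⟩ fun i => f (Q i) ω with hM
  have hMint : Integrable M μ := by
    rw [hM]; exact myIntSup (μ := μ) (fun i ω => f (Q i) ω) fun i => hint _
  set Z : Ω → ℝ := fun ω => ∑ j, exp (f (Q j) ω / lam) with hZ
  set p : Fin q → Ω → ℝ := fun i ω => exp (f (Q i) ω / lam) / Z ω with hp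
  have hZpos : ∀ ω, 0 < Z ω := fun ω => Finset.sum_pos (fun j _ => exp_pos _) ne
  have hpmeas : ∀ i, Measurable (p i) := by
    intro i
    exact (((hmeas _).div_const lam).exp).div
      (Finset.measurable_sum _ fun j _ => ((hmeas _).div_const lam).exp)
  have hp01 : ∀ (i : Fin q) (ω : Ω), 0 ≤ p i ω ∧ p i ω ≤ 1 := by
    intro i ω
    refine ⟨div_nonneg (exp_pos _).le (hZpos ω).le, ?_⟩
    rw [hp]
    simp only
    rw [div_le_one (hZpos ω)]
    exact Finset.single_le_sum (f := fun j => exp (f (Q j) ω / lam))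
      (fun j _ => (exp_pos _).le) (mem_univ i)
  have hpsum : ∀ ω, ∑ i, p i ω = 1 := by
    intro ω
    rw [hp]
    simp only
    rw [← Finset.sum_div]
    exact div_self (hZpos ω).ne'
  have hmul : ∀ (h : Ω → ℝ), Integrable h μ → ∀ i, Integrable (fun ω => h ω * p i ω) μ := by
    intro h hh i
    have h2 := hh.bdd_mul (hpmeas i).aestronglyMeasurable
      (Filter.Eventually.of_forall (p := fun ω => ‖p i ω‖ ≤ 1) fun ω => by
        rw [Real.norm_eq_abs, abs_of_nonneg (hp01 i ω).1]; exact (hp01 i ω).2)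
    simpa [mul_comm] using h2
  have hfmeasF : ∀ i, StronglyMeasurable[MeasurableSpace.comap
      (fun ω (i : Fin q) => f (Q i) ω) inferInstance] (f (Q i)) := by
    intro i
    have h1 : Measurable[MeasurableSpace.comap (fun ω (i : Fin q) => f (Q i) ω) inferInstance]
        (fun ω (i : Fin q) => f (Q i) ω) := Measurable.of_comap_le le_rfl
    exact ((measurable_pi_apply i).comp h1).stronglyMeasurable
  have hkey : ∀ i, ∫ ω, (if r ω = i then f (Q i) ω else 0) ∂μ
      = ∫ ω, f (Q i) ω * p i ω ∂μ := by
    intro i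
    have hχint : Integrable (fun ω => if r ω = i then (1 : ℝ) else 0) μ :=
      (myIte μ r hr (fun _ => (1 : ℝ)) (integrable_const 1) i).1
    have hprodint : Integrable (f (Q i) * fun ω => if r ω = i then (1 : ℝ) else 0) μ := by
      have h2 := (myIte μ r hr (f (Q i)) (hint _) i).1
      have h3 : (f (Q i) * fun ω => if r ω = i then (1 : ℝ) else 0)
          = fun ω => if r ω = i then f (Q i) ω else 0 := by
        ext ω; by_cases h : r ω = i <;> simp [h]
      rw [h3]; exact h2
    have e2 := condExp_mul_of_stronglyMeasurable_left (hfmeasF i) hprodint hχint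
    calc ∫ ω, (if r ω = i then f (Q i) ω else 0) ∂μ
        = ∫ ω, (f (Q i) * fun ω => if r ω = i then (1 : ℝ) else 0) ω ∂μ := by
          refine integral_congr_ae (Filter.Eventually.of_forall fun ω => ?_)
          by_cases h : r ω = i <;> simp [h]
      _ = ∫ ω, (μ[(f (Q i) * fun ω => if r ω = i then (1 : ℝ) else 0) |
            MeasurableSpace.comap (fun ω (i : Fin q) => f (Q i) ω) inferInstance]) ω ∂μ :=
          (integral_condExp hFle).symm
      _ = ∫ ω, f (Q i) ω * p i ω ∂μ := by
          refine integral_congr_ae (e2.trans ?_)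
          filter_upwards [hlik i] with ω hω
          simp only [Pi.mul_apply]
          rw [hω]
  have hφ : ∫ ω, (∑ i, if r ω = i then f (Q i) ω else 0) ∂μ
      = ∑ i, ∫ ω, f (Q i) ω * p i ω ∂μ := by
    rw [integral_finset_sum _ fun i _ => (myIte μ r hr _ (hint _) i).1]
    exact Finset.sum_congr rfl fun i _ => hkey i
  have hMeq : ∫ ω, M ω ∂μ = ∑ i, ∫ ω, M ω * p i ω ∂μ := by
    rw [← integral_finset_sum _ fun i _ => hmul M hMint i]
    refine integral_congr_ae (Filter.Eventually.of_forall fun ω => ?_)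
    show M ω = ∑ i, M ω * p i ω
    rw [← Finset.mul_sum, hpsum ω, mul_one]
  have hsubint : ∀ i : Fin q, Integrable (fun ω => (M ω - f (Q i) ω) * p i ω) μ := by
    intro i
    have := (hmul M hMint i).sub (hmul _ (hint (Q i)) i)
    refine this.congr (Filter.Eventually.of_forall fun ω => ?_)
    simp only [Pi.sub_apply]
    ring
  have hgap : ∑ i, ∫ ω, M ω * p i ω ∂μ - ∑ i, ∫ ω, f (Q i) ω * p i ω ∂μ ≤ lam * C := by
    rw [← Finset.sum_sub_distrib]
    have h1 : ∀ i ∈ (univ : Finset (Fin q)),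
        ∫ ω, M ω * p i ω ∂μ - ∫ ω, f (Q i) ω * p i ω ∂μ
          = ∫ ω, (M ω - f (Q i) ω) * p i ω ∂μ := by
      intro i _
      rw [← integral_sub (hmul M hMint i) (hmul _ (hint (Q i)) i)]
      refine integral_congr_ae (Filter.Eventually.of_forall fun ω => ?_)
      show M ω * p i ω - f (Q i) ω * p i ω = (M ω - f (Q i) ω) * p i ω
      ring
    rw [Finset.sum_congr rfl h1,
      ← integral_finset_sum _ fun i _ => hsubint i]
    have hpt : ∀ ω, ∑ i, (M ω - f (Q i) ω) * p i ω ≤ lam * C := by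
      intro ω
      have hG := myGap hq lam C hlam hC0 hC (fun i => f (Q i) ω)
      have hrepr : ∑ i, (M ω - f (Q i) ω) * p i ω
          = (∑ i, (M ω - f (Q i) ω) * exp (f (Q i) ω / lam)) / Z ω := by
        rw [Finset.sum_div]
        refine Finset.sum_congr rfl fun i _ => ?_
        rw [hp]
        simp only
        ring
      rw [hrepr, div_le_iff₀ (hZpos ω)]
      calc ∑ i, (M ω - f (Q i) ω) * exp (f (Q i) ω / lam) ≤ lam * C * Z ω := hG
      _ = lam * C * Z ω := rfl
    calc ∫ ω, ∑ i, (M ω - f (Q i) ω) * p i ω ∂μ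
        ≤ ∫ ω, lam * C ∂μ := integral_mono (integrable_finset_sum _ fun i _ => hsubint i)
          (integrable_const _) fun ω => hpt ω
      _ = lam * C := by simp
  linarith [hφ, hMeq, hgap]


/-- Under the logistic likelihood with noise parameter `λ`, if `X*` maximizes
`qEUBO(Q) = E[max_i f(Q_i)]` over queries, then
`V^λ(X*) ≥ max_Q V^0(Q) − λ W((q−1)/e)`, where `V^λ` is the one-step value under the
logistic (noisy) response `rλ` and `V^0` is the one-step value under a noise-free
response `r0`. -/
theorem stmt8
    {Ω : Type*} [MeasurableSpace Ω] (μ : Measure Ω) [IsProbabilityMeasure μ]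
    {X : Type*} [Fintype X] [Nonempty X]
    (q : ℕ) (hq : 1 ≤ q)
    (f : X → Ω → ℝ) (hmeas : ∀ y, Measurable (f y)) (hint : ∀ y, Integrable (f y) μ)
    (lam : ℝ) (hlam : 0 < lam)
    (C : ℝ) (hC0 : 0 ≤ C) (hC : C * exp C = ((q : ℝ) - 1) / exp 1)
    (rl r0 : (Fin q → X) → Ω → Fin q)
    (hrl : ∀ Q, Measurable (rl Q)) (hr0 : ∀ Q, Measurable (r0 Q))
    -- `rl` follows the logistic likelihood with parameter `λ`:
    (hlik : ∀ (Q : Fin q → X) (i : Fin q),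
      (μ[(fun ω => if rl Q ω = i then (1 : ℝ) else 0) |
          MeasurableSpace.comap (fun ω (i : Fin q) => f (Q i) ω) inferInstance])
        =ᵐ[μ] fun ω => exp (f (Q i) ω / lam) / ∑ j, exp (f (Q j) ω / lam))
    -- `r0` is noise-free:
    (hnoisefree : ∀ Q : Fin q → X, ∀ᵐ ω ∂μ, ∀ i, f (Q i) ω ≤ f (Q (r0 Q ω)) ω)
    (Xstar : Fin q → X)
    -- `X*` maximizes qEUBO:
    (hXstar : ∀ Q : Fin q → X,
      ∫ ω, (univ.sup' ⟨⟨0, hq⟩, mem_univ _⟩ fun i => f (Q i) ω) ∂μ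
        ≤ ∫ ω, (univ.sup' ⟨⟨0, hq⟩, mem_univ _⟩ fun i => f (Xstar i) ω) ∂μ) :
    ∀ Q : Fin q → X,
      (∫ ω, (univ.sup' univ_nonempty
          fun y => (μ[f y | MeasurableSpace.comap (r0 Q) inferInstance]) ω) ∂μ) - lam * C
        ≤ ∫ ω, (univ.sup' univ_nonempty
            fun y => (μ[f y | MeasurableSpace.comap (rl Xstar) inferInstance]) ω) ∂μ := by
  intro Q
  obtain ⟨Q', hQ'⟩ := myStepA μ hq f hint (r0 Q) (hr0 Q)
  have hB := myStepB μ hq f hint (rl Xstar) (hrl Xstar) Xstar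
  have hCC := myStepC μ hq f hmeas hint lam C hlam hC0 hC (rl Xstar) (hrl Xstar) Xstar
    (hlik Xstar)
  have h1 := hXstar Q'
  linarith
end

section
/- Let p_1, p_2 ≥ 0 with p_1 + p_2 = 1, let a ∈ (1/2, 1), and let q_1 ≥ a and q_2 ≤ 1 − a. Then h(p_1 q_1 + p_2 q_2) − p_1 h(q_1) − p_2 h(q_2) ≥ h(p_1 a + p_2 (1−a)) − h(a), where h is the binary entropy. -/
open Real

/-- Binary entropy function. -/
noncomputable def binEnt (t : ℝ) : ℝ := -t * Real.log t - (1 - t) * Real.log (1 - t)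

lemma binEnt_eq : binEnt = Real.binEntropy := by
  funext t
  simp [binEnt, Real.binEntropy, Real.log_inv]
  ring

lemma binEnt_one_sub (t : ℝ) : binEnt (1 - t) = binEnt t := by
  rw [binEnt_eq, Real.binEntropy_one_sub]

lemma binEnt_continuous : Continuous binEnt := by
  rw [binEnt_eq]; exact Real.binEntropy_continuous

/-- derivative fact -/
lemma hasDerivAt_binEnt {t : ℝ} (h0 : t ≠ 0) (h1 : t ≠ 1) :
    HasDerivAt binEnt (Real.log (1 - t) - Real.log t) t := by
  rw [binEnt_eq]; exact Real.hasDerivAt_binEntropy h0 h1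

/-- Monotone in the variable when the mixture lies below it. -/
lemma key_mono (p c u v : ℝ) (hp : 0 < p) (hp1 : p ≤ 1) (hc : 0 ≤ c)
    (hu : 0 < u) (hv : v ≤ 1) (huv : u ≤ v) (hmix : p * u + c ≤ u) :
    binEnt (p * u + c) - p * binEnt u ≤ binEnt (p * v + c) - p * binEnt v := by
  set g : ℝ → ℝ := fun t => binEnt (p * t + c) - p * binEnt t with hg
  have key : MonotoneOn g (Set.Icc u v) := by
    apply monotoneOn_of_hasDerivWithinAt_nonneg (f' := fun t =>
        (Real.log (1 - (p * t + c)) - Real.log (p * t + c)) * p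
          - p * (Real.log (1 - t) - Real.log t))
      (convex_Icc u v)
    · exact ((binEnt_continuous.comp (by continuity)).sub
        (continuous_const.mul binEnt_continuous)).continuousOn
    · intro x hx
      rw [interior_Icc] at hx
      obtain ⟨hxu, hxv⟩ := hx
      have hx0 : 0 < x := lt_trans hu hxu
      have hx1 : x < 1 := lt_of_lt_of_le hxv hv
      have hm0 : 0 < p * x + c := by positivity
      have hm1 : p * x + c < 1 := by nlinarith
      have h1 : HasDerivAt (fun t => binEnt (p * t + c))
          ((Real.log (1 - (p * x + c)) - Real.log (p * x + c)) * p) x := by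
        have := (hasDerivAt_binEnt (ne_of_gt hm0) (ne_of_lt hm1)).comp x
          (((hasDerivAt_id x).const_mul p).add_const c)
        simpa [Function.comp_def] using this
      exact ((h1.sub ((hasDerivAt_binEnt (ne_of_gt hx0)
        (ne_of_lt hx1)).const_mul p)).hasDerivWithinAt)
    · intro x hx
      rw [interior_Icc] at hx
      obtain ⟨hxu, hxv⟩ := hx
      have hx0 : 0 < x := lt_trans hu hxu
      have hx1 : x < 1 := lt_of_lt_of_le hxv hv
      have hm0 : 0 < p * x + c := by positivity
      have hmx : p * x + c ≤ x := by nlinarith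
      have l1 : Real.log (p * x + c) ≤ Real.log x := Real.log_le_log hm0 hmx
      have l2 : Real.log (1 - x) ≤ Real.log (1 - (p * x + c)) :=
        Real.log_le_log (by linarith) (by linarith)
      nlinarith
  exact key (Set.left_mem_Icc.mpr huv) (Set.right_mem_Icc.mpr huv) huv

/-- Antitone in the variable when the mixture lies above it. -/
lemma key_anti (p c u v : ℝ) (hp : 0 < p) (hp1 : p ≤ 1)
    (hu : 0 ≤ u) (hv : v < 1) (huv : u ≤ v) (hmix : v ≤ p * v + c) (hm1 : p * v + c < 1) :
    binEnt (p * v + c) - p * binEnt v ≤ binEnt (p * u + c) - p * binEnt u := by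
  set g : ℝ → ℝ := fun t => binEnt (p * t + c) - p * binEnt t with hg
  have hc : 0 ≤ c := by nlinarith
  have key : AntitoneOn g (Set.Icc u v) := by
    apply antitoneOn_of_hasDerivWithinAt_nonpos (f' := fun t =>
        (Real.log (1 - (p * t + c)) - Real.log (p * t + c)) * p
          - p * (Real.log (1 - t) - Real.log t))
      (convex_Icc u v)
    · exact ((binEnt_continuous.comp (by continuity)).sub
        (continuous_const.mul binEnt_continuous)).continuousOn
    · intro x hx
      rw [interior_Icc] at hx
      obtain ⟨hxu, hxv⟩ := hx
      have hx0 : 0 < x := lt_of_le_of_lt hu hxu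
      have hx1 : x < 1 := lt_trans hxv hv
      have hm0 : 0 < p * x + c := by positivity
      have hmlt : p * x + c < 1 := by nlinarith
      have h1 : HasDerivAt (fun t => binEnt (p * t + c))
          ((Real.log (1 - (p * x + c)) - Real.log (p * x + c)) * p) x := by
        have := (hasDerivAt_binEnt (ne_of_gt hm0) (ne_of_lt hmlt)).comp x
          (((hasDerivAt_id x).const_mul p).add_const c)
        simpa [Function.comp_def] using this
      exact ((h1.sub ((hasDerivAt_binEnt (ne_of_gt hx0)
        (ne_of_lt hx1)).const_mul p)).hasDerivWithinAt)
    · intro x hx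
      rw [interior_Icc] at hx
      obtain ⟨hxu, hxv⟩ := hx
      have hx0 : 0 < x := lt_of_le_of_lt hu hxu
      have hx1 : x < 1 := lt_trans hxv hv
      have hmx : x ≤ p * x + c := by nlinarith
      have hmlt : p * x + c < 1 := by nlinarith
      have l1 : Real.log x ≤ Real.log (p * x + c) := Real.log_le_log hx0 hmx
      have l2 : Real.log (1 - (p * x + c)) ≤ Real.log (1 - x) :=
        Real.log_le_log (by linarith) (by linarith)
      nlinarith
  exact key (Set.left_mem_Icc.mpr huv) (Set.right_mem_Icc.mpr huv) huv

/-- For `p_1, p_2 ≥ 0` with `p_1 + p_2 = 1`, `a ∈ (1/2,1)`, `q_1 ≥ a`, `q_2 ≤ 1 − a`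
(with `q_1, q_2 ∈ [0,1]`):
`h(p_1 q_1 + p_2 q_2) − p_1 h(q_1) − p_2 h(q_2) ≥ h(p_1 a + p_2 (1−a)) − h(a)`. -/
theorem stmt13 (p₁ p₂ a q₁ q₂ : ℝ)
    (hp₁ : 0 ≤ p₁) (hp₂ : 0 ≤ p₂) (hps : p₁ + p₂ = 1)
    (ha : 1 / 2 < a) (ha1 : a < 1)
    (hq₁ : a ≤ q₁) (hq₁1 : q₁ ≤ 1) (hq₂ : 0 ≤ q₂) (hq₂a : q₂ ≤ 1 - a) :
    binEnt (p₁ * q₁ + p₂ * q₂) - p₁ * binEnt q₁ - p₂ * binEnt q₂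
      ≥ binEnt (p₁ * a + p₂ * (1 - a)) - binEnt a := by
  have hsym := binEnt_one_sub a
  rcases eq_or_lt_of_le hp₁ with h1 | h1
  · have hp2 : p₂ = 1 := by linarith
    simp [← h1, hp2, hsym]
  rcases eq_or_lt_of_le hp₂ with h2 | h2
  · have hp1 : p₁ = 1 := by linarith
    simp [← h2, hp1]
  -- step 1 : increase q₁ from a to q₁
  have step1 : binEnt (p₁ * a + p₂ * q₂) - p₁ * binEnt a
      ≤ binEnt (p₁ * q₁ + p₂ * q₂) - p₁ * binEnt q₁ := by
    apply key_mono p₁ (p₂ * q₂) a q₁ h1 (by linarith) (by positivity)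
      (by linarith) hq₁1 hq₁
    nlinarith
  -- step 2 : decrease q₂ from 1 - a to q₂
  have step2 : binEnt (p₂ * (1 - a) + p₁ * a) - p₂ * binEnt (1 - a)
      ≤ binEnt (p₂ * q₂ + p₁ * a) - p₂ * binEnt q₂ := by
    apply key_anti p₂ (p₁ * a) q₂ (1 - a) h2 (by linarith) hq₂ (by linarith) hq₂a
    · nlinarith
    · nlinarith
  have e1 : p₂ * q₂ + p₁ * a = p₁ * a + p₂ * q₂ := by ring
  have e2 : p₂ * (1 - a) + p₁ * a = p₁ * a + p₂ * (1 - a) := by ring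
  rw [e1, e2] at step2
  have : binEnt a = p₁ * binEnt a + p₂ * binEnt (1 - a) := by
    rw [hsym]; linear_combination (-binEnt a) * hps
  linarith
end
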